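/- Let n, k, b be integers with 1 ≤ k-1 ≤ b ≤ n and b ≥ k. Let X, Y ∈ V_{n,k,b} be such that min(X) < min(Y), or min(X) = min(Y) and max(X) < max(Y). Then the graph distance between X and Y in G_{n,k,b} is at most ⌈(max(Y) - min(X) - b)/(b-k+1)⌉ + 1, where the ceiling is taken over the rationals (the numerator may be negative). -/

import Mathlib

/-- The maximum element of a finite set of naturals (`0` for the empty set). -/
def fmax (X : Finset ℕ) : ℕ := X.max.unbotD 0

/-- The minimum element of a finite set of naturals (`0` for the empty set). -/
def fmin (X : Finset ℕ) : ℕ := X.min.untopD 0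

/-- The vertex set `V_{n,k,b}`: all `k`-element subsets `X` of `{0,…,n}`
with `max X - min X ≤ b`. -/
def Vnkb (n k b : ℕ) : Finset (Finset ℕ) :=
  ((Finset.range (n + 1)).powersetCard k).filter (fun X => fmax X - fmin X ≤ b)

/-- The graph `G_{n,k,b}`: two distinct vertices `X, Y` are adjacent iff
`max (X ∪ Y) - min (X ∪ Y) ≤ b`. -/
def Gnkb (n k b : ℕ) : SimpleGraph (Vnkb n k b) where
  Adj X Y := X ≠ Y ∧ fmax (X.1 ∪ Y.1) - fmin (X.1 ∪ Y.1) ≤ b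
  symm := ⟨by
    rintro X Y ⟨h1, h2⟩
    exact ⟨h1.symm, by rwa [Finset.union_comm]⟩⟩
  loopless := ⟨by rintro X ⟨h1, -⟩; exact h1 rfl⟩

/-- The bandwidth of a finite graph: the minimum over all bijective labellings of the
vertices by `{0, …, |V|-1}` (equivalently `{1, …, |V|}`) of the maximal absolute
label difference along an edge. -/
noncomputable def bandwidth {V : Type*} [Fintype V] (G : SimpleGraph V) : ℕ :=
  sInf {m : ℕ | ∃ f : V ≃ Fin (Fintype.card V),
    ∀ u v : V, G.Adj u v → (((f u : ℕ) : ℤ) - ((f v : ℕ) : ℤ)).natAbs ≤ m}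

lemma fmax_mem {X : Finset ℕ} (h : X.Nonempty) : fmax X ∈ X := by
  unfold fmax
  rw [← Finset.coe_max' h, WithBot.unbotD_coe]
  exact X.max'_mem h

lemma fmin_mem {X : Finset ℕ} (h : X.Nonempty) : fmin X ∈ X := by
  unfold fmin
  rw [← Finset.coe_min' h, WithTop.untopD_coe]
  exact X.min'_mem h

lemma le_fmax {X : Finset ℕ} {x : ℕ} (hx : x ∈ X) : x ≤ fmax X := by
  unfold fmax
  rw [← Finset.coe_max' ⟨x, hx⟩, WithBot.unbotD_coe]
  exact X.le_max' x hx

lemma fmin_le {X : Finset ℕ} {x : ℕ} (hx : x ∈ X) : fmin X ≤ x := by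
  unfold fmin
  rw [← Finset.coe_min' ⟨x, hx⟩, WithTop.untopD_coe]
  exact X.min'_le x hx

lemma spread_le {A : Finset ℕ} {b : ℕ}
    (h : ∀ x ∈ A, ∀ y ∈ A, x ≤ y + b) : fmax A - fmin A ≤ b := by
  rcases A.eq_empty_or_nonempty with rfl | hA
  · simp [fmax, fmin]
  · have := h _ (fmax_mem hA) _ (fmin_mem hA)
    omega

lemma vnkb_spec {n k b : ℕ} {X : Finset ℕ} (h : X ∈ Vnkb n k b) :
    X.card = k ∧ (∀ x ∈ X, x ≤ n) ∧ fmax X - fmin X ≤ b := by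
  rw [Vnkb, Finset.mem_filter, Finset.mem_powersetCard] at h
  exact ⟨h.1.2, fun x hx => by
    have := h.1.1 hx; simpa [Finset.mem_range, Nat.lt_succ_iff] using this, h.2⟩

lemma walk_chain {V : Type*} (G : SimpleGraph V) (f : ℕ → V) :
    ∀ m, (∀ i < m, G.Adj (f i) (f (i+1))) → ∃ w : G.Walk (f 0) (f m), w.length = m := by
  intro m
  induction m with
  | zero => exact fun _ => ⟨.nil, rfl⟩
  | succ m ih =>
    intro h
    obtain ⟨w, hw⟩ := ih (fun i hi => h i (by omega))
    exact ⟨w.concat (h m (by omega)), by simp [SimpleGraph.Walk.length_concat, hw]⟩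

lemma card_le_spread {X : Finset ℕ} (h : X.Nonempty) :
    X.card ≤ fmax X - fmin X + 1 := by
  have hsub : X ⊆ Finset.Icc (fmin X) (fmax X) := fun x hx =>
    Finset.mem_Icc.mpr ⟨fmin_le hx, le_fmax hx⟩
  calc X.card ≤ (Finset.Icc (fmin X) (fmax X)).card := Finset.card_le_card hsub
    _ = fmax X - fmin X + 1 := by
        rw [Nat.card_Icc]
        have := fmin_le (fmax_mem h)
        omega

/-- If `X, Y ∈ V_{n,k,b}` with `min X < min Y`, or `min X = min Y` and `max X < max Y`,
then the graph distance between `X` and `Y` in `G_{n,k,b}` is at most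
`⌈(max Y - min X - b)/(b-k+1)⌉ + 1` (ceiling over the rationals). -/
theorem dist_le_ceil (n k b : ℕ)
    (h1 : 1 ≤ k - 1) (h2 : k - 1 ≤ b) (h3 : b ≤ n) (hbk : k ≤ b)
    (X Y : Vnkb n k b)
    (hXY : fmin X.1 < fmin Y.1 ∨ (fmin X.1 = fmin Y.1 ∧ fmax X.1 < fmax Y.1)) :
    ((Gnkb n k b).dist X Y : ℤ) ≤
      ⌈((fmax Y.1 : ℚ) - (fmin X.1 : ℚ) - (b : ℚ)) / ((b : ℚ) - (k : ℚ) + 1)⌉ + 1 := by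
  obtain ⟨hXcard, hXle, hXspread⟩ := vnkb_spec X.2
  obtain ⟨hYcard, hYle, hYspread⟩ := vnkb_spec Y.2
  have hk2 : 2 ≤ k := by omega
  have hXne : X.1.Nonempty := Finset.card_pos.mp (by rw [hXcard]; omega)
  have hYne : Y.1.Nonempty := Finset.card_pos.mp (by rw [hYcard]; omega)
  set p := fmin X.1 with hp
  set q := fmax Y.1 with hq
  have hXmm : p ≤ fmax X.1 := fmin_le (fmax_mem hXne)
  have hYmm : fmin Y.1 ≤ q := fmin_le (fmax_mem hYne)
  have hXb : fmax X.1 ≤ p + b := by omega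
  have hYb : q ≤ fmin Y.1 + b := by omega
  have hXc : k ≤ fmax X.1 - p + 1 := by
    have := card_le_spread hXne; omega
  have hYc : k ≤ q - fmin Y.1 + 1 := by
    have := card_le_spread hYne; omega
  have hpY : p ≤ fmin Y.1 := by rcases hXY with h | ⟨h, h'⟩ <;> omega
  have hpk : p + k ≤ q := by rcases hXY with h | ⟨h, h'⟩ <;> omega
  have hqn : q ≤ n := hYle _ (fmax_mem hYne)
  have hXneY : X ≠ Y := by
    intro h
    have hv : X.1 = Y.1 := congrArg Subtype.val h
    rcases hXY with h' | ⟨h', h''⟩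
    · have hm : p ∈ X.1 := by rw [hp]; exact fmin_mem hXne
      rw [hv] at hm
      have := fmin_le hm
      omega
    · have hm : q ∈ Y.1 := by rw [hq]; exact fmax_mem hYne
      rw [← hv] at hm
      have := le_fmax hm
      omega
  set d := b - k + 1 with hd
  have hdk : b + 1 = d + k := by omega
  have hd1 : 1 ≤ d := by omega
  have hdQ : (0:ℚ) < (d:ℚ) := by exact_mod_cast hd1
  have hbQ : (b:ℚ) + 1 = (d:ℚ) + (k:ℚ) := by exact_mod_cast hdk
  have hden : (b:ℚ) - (k:ℚ) + 1 = (d:ℚ) := by linarith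
  rw [hden]
  set E : ℚ := ((q:ℚ) - (p:ℚ) - (b:ℚ)) / (d:ℚ) with hE
  by_cases hcase : q ≤ b + p
  · -- X and Y are adjacent
    have hadj : (Gnkb n k b).Adj X Y := by
      refine ⟨hXneY, spread_le ?_⟩
      have key : ∀ z ∈ X.1 ∪ Y.1, p ≤ z ∧ z ≤ p + b := by
        intro z hz
        rcases Finset.mem_union.mp hz with hz | hz
        · exact ⟨fmin_le hz, le_trans (le_fmax hz) hXb⟩
        · have h1 := fmin_le hz; have h2 := le_fmax hz
          constructor <;> omega
      intro x hx y hy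
      have k1 := key x hx; have k2 := key y hy; omega
    have hdist : (Gnkb n k b).dist X Y ≤ 1 := by
      have hw := SimpleGraph.dist_le (SimpleGraph.Walk.cons hadj SimpleGraph.Walk.nil)
      simpa using hw
    have hE1 : (-1 : ℚ) < E := by
      rw [hE, lt_div_iff₀ hdQ]
      have hqQ : (p:ℚ) + (k:ℚ) ≤ (q:ℚ) := by exact_mod_cast hpk
      linarith
    have hceil : (0:ℤ) ≤ ⌈E⌉ := by
      by_contra hcon
      push_neg at hcon
      have h1' : E ≤ (⌈E⌉ : ℚ) := Int.le_ceil E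
      have hc2 : ⌈E⌉ ≤ (-1 : ℤ) := by omega
      have h2' : ((⌈E⌉ : ℤ) : ℚ) ≤ ((-1 : ℤ) : ℚ) := by exact_mod_cast hc2
      push_cast at h2'
      linarith
    have hdZ : ((Gnkb n k b).dist X Y : ℤ) ≤ 1 := by exact_mod_cast hdist
    omega
  · push_neg at hcase
    set t := ⌈E⌉ with ht
    have htpos : 1 ≤ t := by
      have : 0 < E := by
        rw [hE]
        apply div_pos _ hdQ
        have : (b:ℚ) + (p:ℚ) < (q:ℚ) := by exact_mod_cast hcase
        linarith
      have := Int.ceil_pos.mpr this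
      omega
    set T := t.toNat with hT
    have hTt : (T:ℤ) = t := Int.toNat_of_nonneg (by omega)
    have hT1 : 1 ≤ T := by omega
    set e := T * d with he
    have hTQ : ((T:ℕ):ℚ) = ((t:ℤ):ℚ) := by exact_mod_cast hTt
    have heQ : ((e:ℕ):ℚ) = ((t:ℤ):ℚ) * (d:ℚ) := by rw [he]; push_cast [← hTQ]; ring
    have hle : E ≤ ((t:ℤ):ℚ) := Int.le_ceil E
    have hlt : ((t:ℤ):ℚ) < E + 1 := Int.ceil_lt_add_one E
    have hEd : E * (d:ℚ) = (q:ℚ) - (p:ℚ) - (b:ℚ) := by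
      rw [hE]; field_simp
    have hkey1 : q ≤ b + p + e := by
      have h' : (q:ℚ) - (p:ℚ) - (b:ℚ) ≤ (e:ℚ) := by
        rw [heQ, ← hEd]
        exact mul_le_mul_of_nonneg_right hle (le_of_lt hdQ)
      have h'' : (q:ℚ) ≤ (b:ℚ) + (p:ℚ) + (e:ℚ) := by linarith
      exact_mod_cast h''
    have hkey2 : p + e + k ≤ q := by
      have h' : (e:ℚ) < (q:ℚ) - (p:ℚ) - (b:ℚ) + (d:ℚ) := by
        rw [heQ]
        have hmul := mul_lt_mul_of_pos_right hlt hdQ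
        have : (E + 1) * (d:ℚ) = E * d + d := by ring
        rw [this, hEd] at hmul
        linarith
      have h'' : (e:ℚ) + (b:ℚ) + (p:ℚ) < (q:ℚ) + (d:ℚ) := by linarith
      have h''' : e + b + p < q + d := by exact_mod_cast h''
      omega
    -- the intermediate vertices
    have hZmem : ∀ i, 1 ≤ i → i ≤ T →
        Finset.Icc (p + i*d) (p + i*d + (k-1)) ∈ Vnkb n k b := by
      intro i hi1 hi2
      have hid : i * d ≤ e := by rw [he]; exact Nat.mul_le_mul_right d hi2
      rw [Vnkb, Finset.mem_filter, Finset.mem_powersetCard]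
      refine ⟨⟨?_, ?_⟩, ?_⟩
      · intro x hx
        rw [Finset.mem_Icc] at hx
        rw [Finset.mem_range]
        omega
      · rw [Nat.card_Icc]; omega
      · apply spread_le
        intro x hx y hy
        rw [Finset.mem_Icc] at hx hy
        omega
    let f : ℕ → ↥(Vnkb n k b) := fun i =>
      if h0 : i = 0 then X
      else if hT' : T + 1 ≤ i then Y
      else ⟨Finset.Icc (p + i*d) (p + i*d + (k-1)), hZmem i (by omega) (by omega)⟩
    have hf0 : f 0 = X := rfl
    have hfY : f (T+1) = Y := by
      have ha : ¬ (T + 1 = 0) := by omega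
      have hb' : T + 1 ≤ T + 1 := le_rfl
      simp only [f, dif_neg ha, dif_pos hb']
    have hfmid : ∀ i, 1 ≤ i → i ≤ T →
        (f i).1 = Finset.Icc (p + i*d) (p + i*d + (k-1)) := by
      intro i hi1 hi2
      have ha : ¬ (i = 0) := by omega
      have hb' : ¬ (T + 1 ≤ i) := by omega
      simp only [f, dif_neg ha, dif_neg hb']
    have hadj : ∀ i < T + 1, (Gnkb n k b).Adj (f i) (f (i+1)) := by
      intro i hi
      by_cases hi0 : i = 0
      · subst hi0
        show (Gnkb n k b).Adj (f 0) (f 1)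
        rw [hf0]
        have hm1 := hfmid 1 (by omega) (by omega)
        refine ⟨?_, ?_⟩
        · intro hc
          have hc' := congrArg Subtype.val hc
          rw [hm1] at hc'
          have hpX : p ∈ X.1 := fmin_mem hXne
          rw [hc', Finset.mem_Icc] at hpX
          omega
        · apply spread_le
          intro x hx y hy
          rw [hm1] at hx hy
          have key : ∀ z ∈ X.1 ∪ Finset.Icc (p + 1*d) (p + 1*d + (k-1)),
              p ≤ z ∧ z ≤ p + b := by
            intro z hz
            rcases Finset.mem_union.mp hz with hz | hz
            · exact ⟨fmin_le hz, le_trans (le_fmax hz) hXb⟩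
            · rw [Finset.mem_Icc] at hz; omega
          have k1 := key x hx; have k2 := key y hy; omega
      · by_cases hiT : i = T
        · subst hiT
          rw [hfY]
          have hmT := hfmid T (by omega) le_rfl
          refine ⟨?_, ?_⟩
          · intro hc
            have hc' := congrArg Subtype.val hc
            rw [hmT] at hc'
            have hqY : q ∈ Y.1 := fmax_mem hYne
            rw [← hc', Finset.mem_Icc] at hqY
            have hTd : T * d = e := he.symm
            omega
          · apply spread_le
            intro x hx y hy
            rw [hmT] at hx hy
            have key : ∀ z ∈ Finset.Icc (p + T*d) (p + T*d + (k-1)) ∪ Y.1,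
                (p + e ≤ z ∧ z ≤ p + e + (k-1)) ∨ (fmin Y.1 ≤ z ∧ z ≤ q) := by
              intro z hz
              rcases Finset.mem_union.mp hz with hz | hz
              · rw [Finset.mem_Icc] at hz
                left; rw [he]; exact hz
              · right; exact ⟨fmin_le hz, le_fmax hz⟩
            have k1 := key x hx; have k2 := key y hy
            omega
        · have hm1 := hfmid i (by omega) (by omega)
          have hm2 := hfmid (i+1) (by omega) (by omega)
          have hmul : (i+1)*d = i*d + d := by ring
          refine ⟨?_, ?_⟩
          · intro hc
            have hc' := congrArg Subtype.val hc
            rw [hm1, hm2] at hc'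
            have hmm : p + i*d ∈ Finset.Icc (p + i*d) (p + i*d + (k-1)) := by
              rw [Finset.mem_Icc]; omega
            rw [hc', Finset.mem_Icc] at hmm
            omega
          · apply spread_le
            intro x hx y hy
            rw [hm1, hm2, Finset.mem_union, Finset.mem_Icc, Finset.mem_Icc] at hx hy
            omega
    obtain ⟨w, hw⟩ := walk_chain (Gnkb n k b) f (T+1) hadj
    have hdist := SimpleGraph.dist_le w
    rw [hw, hf0, hfY] at hdist
    have hdZ : ((Gnkb n k b).dist X Y : ℤ) ≤ (T:ℤ) + 1 := by exact_mod_cast hdist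
    omega
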